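/- If N is a graded 2-absorbing coprimary R-submodule of a graded R-module M, then Ann_R(N) is a graded 2-absorbing primary ideal of R. -/

import Mathlib

open DirectSum Pointwise

variable {G : Type} [AddGroup G] [DecidableEq G]
variable {R : Type} [CommRing R] (𝒜 : G → AddSubgroup R) [GradedRing 𝒜]
variable {M : Type} [AddCommGroup M] [Module R M] (ℳ : G → AddSubgroup M)
  [SetLike.GradedSMul 𝒜 ℳ] [DirectSum.Decomposition ℳ]

/-- A submodule is graded if it contains every homogeneous component of each of
its elements. -/
def IsGradedSubmodule (N : Submodule R M) : Prop :=
  ∀ (g : G) (m : M), m ∈ N → (DirectSum.decompose ℳ m g : M) ∈ N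

/-- The graded radical of an ideal: all `r` such that for each `g` some positive
power of the degree-`g` component of `r` lies in `P`. -/
def gradRad (P : Ideal R) : Set R :=
  {r : R | ∀ g : G, ∃ n : ℕ, 0 < n ∧ ((DirectSum.decompose 𝒜 r g : R)) ^ n ∈ P}

/-- Graded 2-absorbing coprimary submodule. -/
def IsGr2AbsCoprimary (N : Submodule R M) : Prop :=
  N ≠ ⊥ ∧ IsGradedSubmodule ℳ N ∧
  ∀ x y : R, (∃ g, x ∈ 𝒜 g) → (∃ g, y ∈ 𝒜 g) →
    ∀ K : Submodule R M, IsGradedSubmodule ℳ K →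
      (∀ m ∈ N, (x * y) • m ∈ K) →
      x ∈ gradRad 𝒜 (K.colon N) ∨ y ∈ gradRad 𝒜 (K.colon N) ∨ x * y ∈ N.annihilator

/-- Graded 2-absorbing primary ideal. -/
def IsGr2AbsPrimaryIdeal (P : Ideal R) : Prop :=
  P ≠ ⊤ ∧ (∀ (g : G) (r : R), r ∈ P → (DirectSum.decompose 𝒜 r g : R) ∈ P) ∧
  ∀ a b c : R, (∃ g, a ∈ 𝒜 g) → (∃ g, b ∈ 𝒜 g) → (∃ g, c ∈ 𝒜 g) →
    a * b * c ∈ P → a * b ∈ P ∨ a * c ∈ gradRad 𝒜 P ∨ b * c ∈ gradRad 𝒜 P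

/-- Component of a scalar times a homogeneous element. -/
lemma key_smul (r : R) {h : G} {x : M} (hx : x ∈ ℳ h) (g : G) :
    (DirectSum.decompose ℳ (r • x) (g + h) : M) = (DirectSum.decompose 𝒜 r g : R) • x := by
  refine DirectSum.Decomposition.inductionOn 𝒜
    (motive := fun r => (DirectSum.decompose ℳ (r • x) (g + h) : M)
      = (DirectSum.decompose 𝒜 r g : R) • x) ?_ ?_ ?_ r
  · simp
  · rintro i ⟨ri, hri⟩
    show (DirectSum.decompose ℳ (ri • x) (g + h) : M) = (DirectSum.decompose 𝒜 ri g : R) • x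
    have hmem : ri • x ∈ ℳ (i + h) := SetLike.GradedSMul.smul_mem hri hx
    by_cases hig : g = i
    · subst hig
      rw [DirectSum.decompose_of_mem_same ℳ hmem, DirectSum.decompose_of_mem_same 𝒜 hri]
    · rw [DirectSum.decompose_of_mem_ne ℳ hmem (fun hc => hig (add_right_cancel hc).symm),
        DirectSum.decompose_of_mem_ne 𝒜 hri (Ne.symm hig), zero_smul]
  · intro a b ha hb
    simp only [add_smul, DirectSum.decompose_add, DirectSum.add_apply, AddSubgroup.coe_add,
      ha, hb]

/-- Component of a homogeneous scalar times an arbitrary element. -/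
lemma key_smul' {c : R} {gc : G} (hc : c ∈ 𝒜 gc) (m : M) (h : G) :
    (DirectSum.decompose ℳ (c • m) (gc + h) : M) = c • (DirectSum.decompose ℳ m h : M) := by
  refine DirectSum.Decomposition.inductionOn ℳ
    (motive := fun m => (DirectSum.decompose ℳ (c • m) (gc + h) : M)
      = c • (DirectSum.decompose ℳ m h : M)) ?_ ?_ ?_ m
  · simp
  · rintro j ⟨x, hxj⟩
    show (DirectSum.decompose ℳ (c • x) (gc + h) : M) = c • (DirectSum.decompose ℳ x h : M)
    have hmem : c • x ∈ ℳ (gc + j) := SetLike.GradedSMul.smul_mem hc hxj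
    by_cases hjh : h = j
    · subst hjh
      rw [DirectSum.decompose_of_mem_same ℳ hmem, DirectSum.decompose_of_mem_same ℳ hxj]
    · rw [DirectSum.decompose_of_mem_ne ℳ hmem (fun hcontr => hjh (add_left_cancel hcontr).symm),
        DirectSum.decompose_of_mem_ne ℳ hxj (Ne.symm hjh), smul_zero]
  · intro a b ha hb
    simp only [smul_add, DirectSum.decompose_add, DirectSum.add_apply, AddSubgroup.coe_add,
      ha, hb]

/-- The annihilator of a graded submodule is graded. -/
lemma ann_comp {N : Submodule R M} (hNg : IsGradedSubmodule ℳ N) {r : R}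
    (hr : r ∈ N.annihilator) (g : G) : (DirectSum.decompose 𝒜 r g : R) ∈ N.annihilator := by
  classical
  rw [Submodule.mem_annihilator] at hr ⊢
  intro m hm
  have hcomp : ∀ h : G, (DirectSum.decompose 𝒜 r g : R) • (DirectSum.decompose ℳ m h : M) = 0 := by
    intro h
    rw [← key_smul 𝒜 ℳ r (SetLike.coe_mem (DirectSum.decompose ℳ m h)) g,
      hr _ (hNg h m hm)]
    simp
  conv_lhs => rw [← DirectSum.sum_support_decompose ℳ m]
  rw [Finset.smul_sum]
  exact Finset.sum_eq_zero fun h _ => hcomp h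

/-- A homogeneous element with a power in `P` lies in the graded radical. -/
lemma mem_gradRad_of_homog (P : Ideal R) {w : R} {gw : G} (hw : w ∈ 𝒜 gw) {n : ℕ}
    (hn : 0 < n) (hwn : w ^ n ∈ P) : w ∈ gradRad 𝒜 P := by
  intro g
  by_cases hg : g = gw
  · subst hg
    exact ⟨n, hn, by rwa [DirectSum.decompose_of_mem_same 𝒜 hw]⟩
  · exact ⟨1, one_pos, by rw [DirectSum.decompose_of_mem_ne 𝒜 hw (Ne.symm hg)]; simp⟩

theorem stmt_1 (N : Submodule R M) (hN : IsGr2AbsCoprimary 𝒜 ℳ N) :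
    IsGr2AbsPrimaryIdeal 𝒜 N.annihilator := by
  obtain ⟨hbot, hNg, hmain⟩ := hN
  refine ⟨?_, fun g r hr => ann_comp 𝒜 ℳ hNg hr g, ?_⟩
  · intro htop
    apply hbot
    rw [Submodule.eq_bot_iff]
    intro m hm
    have h1 : (1 : R) ∈ N.annihilator := htop ▸ Submodule.mem_top
    rw [Submodule.mem_annihilator] at h1
    simpa using h1 m hm
  · rintro a b c ⟨ga, hga⟩ ⟨gb, hgb⟩ ⟨gc, hgc⟩ habc
    set K : Submodule R M := Submodule.torsionBy R M c with hK
    have hKg : IsGradedSubmodule ℳ K := by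
      intro g m hm
      rw [hK, Submodule.mem_torsionBy_iff] at hm ⊢
      rw [← key_smul' 𝒜 ℳ hgc m g, hm]
      simp
    have habK : ∀ m ∈ N, (a * b) • m ∈ K := by
      intro m hm
      rw [hK, Submodule.mem_torsionBy_iff, smul_smul]
      have := Submodule.mem_annihilator.mp habc m hm
      rwa [show c * (a * b) = a * b * c by ring]
    rcases hmain a b ⟨ga, hga⟩ ⟨gb, hgb⟩ K hKg habK with ha | hb | hab
    · right; left
      obtain ⟨n, hn, han⟩ := ha ga
      rw [DirectSum.decompose_of_mem_same 𝒜 hga] at han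
      obtain ⟨k, rfl⟩ : ∃ k, n = k + 1 := ⟨n - 1, (Nat.succ_pred_eq_of_pos hn).symm⟩
      refine mem_gradRad_of_homog 𝒜 N.annihilator (SetLike.mul_mem_graded hga hgc)
        (Nat.succ_pos k) ?_
      rw [Submodule.mem_annihilator]
      intro m hm
      have h1 : a ^ (k + 1) • m ∈ K := Submodule.mem_colon.mp han m hm
      rw [hK, Submodule.mem_torsionBy_iff, ← mul_smul] at h1
      calc (a * c) ^ (k + 1) • m = (c ^ k * (c * a ^ (k + 1))) • m := by ring_nf
        _ = c ^ k • ((c * a ^ (k + 1)) • m) := by rw [mul_smul]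
        _ = 0 := by rw [h1, smul_zero]
    · right; right
      obtain ⟨n, hn, hbn⟩ := hb gb
      rw [DirectSum.decompose_of_mem_same 𝒜 hgb] at hbn
      obtain ⟨k, rfl⟩ : ∃ k, n = k + 1 := ⟨n - 1, (Nat.succ_pred_eq_of_pos hn).symm⟩
      refine mem_gradRad_of_homog 𝒜 N.annihilator (SetLike.mul_mem_graded hgb hgc)
        (Nat.succ_pos k) ?_
      rw [Submodule.mem_annihilator]
      intro m hm
      have h1 : b ^ (k + 1) • m ∈ K := Submodule.mem_colon.mp hbn m hm
      rw [hK, Submodule.mem_torsionBy_iff, ← mul_smul] at h1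
      calc (b * c) ^ (k + 1) • m = (c ^ k * (c * b ^ (k + 1))) • m := by ring_nf
        _ = c ^ k • ((c * b ^ (k + 1)) • m) := by rw [mul_smul]
        _ = 0 := by rw [h1, smul_zero]
    · left; exact hab
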